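/- Let e₁,…,e_k be square-integrable centered Gaussian random variables. Then the Gram determinant of the differences satisfies G(e₂−e₁, e₃−e₂, …, e_k−e_{k−1}) ≥ Var(e₂|e₁) · Var(e₃|e₁,e₂) ⋯ Var(e_k|e₁,…,e_{k−1}), where Var(e_j|e₁,…,e_{j−1}) denotes the squared distance in L² from e_j to the closed linear span of e₁,…,e_{j−1}, and G denotes the Gram determinant with respect to the L² inner product. -/

import Mathlib

open Metric Finset InnerProductSpace

instance myWFFin (m : ℕ) : WellFoundedLT (Fin m) := inferInstance

section Gram

variable {H : Type*} [NormedAddCommGroup H] [InnerProductSpace ℝ H]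

open scoped RealInnerProductSpace

lemma my_inner_gramSchmidt_self {m : ℕ} (v : Fin m → H) (i : Fin m) :
    ⟪gramSchmidt ℝ v i, v i⟫ = ‖gramSchmidt ℝ v i‖ ^ 2 := by
  conv_lhs => rw [gramSchmidt_def'' ℝ v i]
  rw [inner_add_right, inner_sum]
  rw [show ⟪gramSchmidt ℝ v i, gramSchmidt ℝ v i⟫ = ‖gramSchmidt ℝ v i‖ ^ 2 from
    real_inner_self_eq_norm_sq _]
  rw [Finset.sum_eq_zero, add_zero]
  intro k hk
  rw [inner_smul_right, gramSchmidt_orthogonal ℝ v (Finset.mem_Iio.mp hk).ne', mul_zero]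

lemma gram_det_eq {m : ℕ} (v : Fin m → H) :
    Matrix.det (Matrix.of fun i j : Fin m => ⟪v i, v j⟫) =
      ∏ i : Fin m, ‖gramSchmidt ℝ v i‖ ^ 2 := by
  classical
  set g : Fin m → H := gramSchmidt ℝ v with hg
  set A : Matrix (Fin m) (Fin m) ℝ :=
    Matrix.of fun i k => if g k = 0 then (if i = k then (1:ℝ) else 0)
      else ⟪g k, v i⟫ / ‖g k‖ ^ 2 with hA
  have hAdiag : ∀ i, A i i = 1 := by
    intro i
    by_cases h : g i = 0
    · simp [hA, h]
    · have h2 : ‖g i‖ ^ 2 ≠ 0 := pow_ne_zero _ (norm_ne_zero_iff.mpr h)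
      simp only [hA, Matrix.of_apply, if_neg h]
      rw [my_inner_gramSchmidt_self, div_self h2]
  have hAzero : ∀ i k : Fin m, i < k → A i k = 0 := by
    intro i k hik
    by_cases h : g k = 0
    · simp [hA, h, hik.ne]
    · simp [hA, h]; exact gramSchmidt_inv_triangular ℝ v hik
  have hve : ∀ i, v i = ∑ k, A i k • g k := by
    intro i
    conv_lhs => rw [gramSchmidt_def'' ℝ v i]
    rw [show (Finset.univ : Finset (Fin m)) = insert i ((Finset.Iio i) ∪ (Finset.Ioi i)) by
      ext k
      simp only [mem_univ, mem_insert, mem_union, mem_Iio, mem_Ioi, true_iff]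
      rcases lt_trichotomy k i with h | h | h
      · exact Or.inr (Or.inl h)
      · exact Or.inl h
      · exact Or.inr (Or.inr h)]
    rw [Finset.sum_insert (by simp), Finset.sum_union (by
      rw [Finset.disjoint_left]; intro a ha hb
      exact absurd ((Finset.mem_Ioi.mp hb).trans (Finset.mem_Iio.mp ha)) (lt_irrefl i))]
    have h1 : A i i • g i = g i := by rw [hAdiag]; exact one_smul _ _
    have h2 : ∑ k ∈ Finset.Ioi i, A i k • g k = 0 := by
      apply Finset.sum_eq_zero
      intro k hk
      rw [hAzero i k (Finset.mem_Ioi.mp hk), zero_smul]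
    rw [h1, h2, add_zero]
    congr 1
    apply Finset.sum_congr rfl
    intro k _
    by_cases h : g k = 0
    · simp only [h, smul_zero]
      rw [show gramSchmidt ℝ v k = g k from rfl, h, smul_zero]
    · simp [hA, h]; rfl
  have hinner : ∀ i k, ⟪v i, g k⟫ = A i k * ‖g k‖ ^ 2 := by
    intro i k
    conv_lhs => rw [hve i]
    rw [sum_inner]
    rw [Finset.sum_eq_single k]
    · rw [real_inner_smul_left, real_inner_self_eq_norm_sq]
    · intro l _ hl
      rw [real_inner_smul_left, gramSchmidt_orthogonal ℝ v hl, mul_zero]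
    · intro h; exact absurd (Finset.mem_univ k) h
  have hfact : Matrix.of (fun i j : Fin m => ⟪v i, v j⟫) =
      A * Matrix.diagonal (fun k => ‖g k‖ ^ 2) * A.transpose := by
    rw [Matrix.mul_assoc]
    ext i j
    rw [Matrix.mul_apply, Matrix.of_apply]
    conv_lhs => rw [hve i]
    rw [sum_inner]
    apply Finset.sum_congr rfl
    intro k _
    rw [real_inner_smul_left, real_inner_comm, hinner j k,
      Matrix.diagonal_mul, Matrix.transpose_apply]
    ring
  have hdetA : A.det = 1 := by
    have htri : A.BlockTriangular OrderDual.toDual := fun i j hij => hAzero i j hij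
    rw [Matrix.det_of_lowerTriangular A htri]
    simp [hAdiag]
  rw [hfact, Matrix.det_mul, Matrix.det_mul, Matrix.det_transpose, hdetA,
    Matrix.det_diagonal, one_mul, mul_one]

end Gram


/-- **Gram determinant lower bound (Lemma 2.2).** For vectors `e 0, …, e n` of a real
Hilbert space (e.g. square integrable centered Gaussian random variables in `L²(Ω)`),
the Gram determinant of the successive differences dominates the product of the
conditional variances, i.e. the squared distances of `e (i+1)` to the span of
`e 0, …, e i`. -/
theorem stmt_1 {H : Type*} [NormedAddCommGroup H] [InnerProductSpace ℝ H] [CompleteSpace H]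
    (n : ℕ) (e : Fin (n + 1) → H) :
    Matrix.det (Matrix.of fun i j : Fin n =>
        (inner ℝ (e i.succ - e i.castSucc) (e j.succ - e j.castSucc) : ℝ)) ≥
      ∏ i : Fin n,
        (Metric.infDist (e i.succ)
          (↑(Submodule.span ℝ (e '' {j : Fin (n + 1) | j ≤ i.castSucc})))) ^ 2 := by
  classical
  set v : Fin n → H := fun i => e i.succ - e i.castSucc with hv
  set g : Fin n → H := gramSchmidt ℝ v with hg
  rw [show (Matrix.of fun i j : Fin n =>
      (inner ℝ (e i.succ - e i.castSucc) (e j.succ - e j.castSucc) : ℝ)) =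
      Matrix.of fun i j : Fin n => (inner ℝ (v i) (v j) : ℝ) from rfl]
  rw [gram_det_eq v]
  apply Finset.prod_le_prod
  · intro i _
    positivity
  · intro i _
    set S : Submodule ℝ H := Submodule.span ℝ (e '' {j : Fin (n + 1) | j ≤ i.castSucc}) with hS
    have hsub : v i - g i ∈ S := by
      have h1 : v i - g i ∈ Submodule.span ℝ (g '' Set.Iio i) := by
        rw [hg, gramSchmidt_def ℝ v i]
        rw [sub_sub_cancel]
        apply Submodule.sum_mem
        intro k hk
        have h2 : (ℝ ∙ gramSchmidt ℝ v k) ≤ Submodule.span ℝ (g '' Set.Iio i) :=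
          Submodule.span_mono (Set.singleton_subset_iff.mpr ⟨k, Finset.mem_Iio.mp hk, rfl⟩)
        exact h2 (SetLike.coe_mem _)
      rw [hg, span_gramSchmidt_Iio ℝ v i] at h1
      refine Submodule.span_le.mpr ?_ h1
      rintro x ⟨j, hj, rfl⟩
      have hj' : (j : Fin n) < i := hj
      refine sub_mem (Submodule.subset_span ⟨j.succ, ?_, rfl⟩)
        (Submodule.subset_span ⟨j.castSucc, ?_, rfl⟩)
      · show j.succ ≤ i.castSucc
        rw [Fin.le_def]
        simp only [Fin.val_succ, Fin.coe_castSucc]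
        exact hj'
      · show j.castSucc ≤ i.castSucc
        rw [Fin.le_def]
        simp only [Fin.coe_castSucc]
        exact le_of_lt hj'
    have hw : e i.castSucc + (v i - g i) ∈ S := by
      refine add_mem (Submodule.subset_span
        (Set.mem_image_of_mem e (Set.mem_setOf_eq ▸ le_refl i.castSucc))) hsub
    have hle : Metric.infDist (e i.succ) (S : Set H) ≤ ‖g i‖ := by
      have := Metric.infDist_le_dist_of_mem (x := e i.succ) hw
      rwa [dist_eq_norm, show e i.succ - (e i.castSucc + (v i - g i)) = g i by
        simp only [hv]; abel] at this
    exact pow_le_pow_left₀ Metric.infDist_nonneg hle 2
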